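/- Let δ ∈ ℝ∪{∞}. The function d_δ is an ultrametric distance on 𝒱(•,δ): it is symmetric, d_δ(V_E,V_F) = 0 if and only if V_E = V_F, and d_δ(V_E,V_F) ≤ max{d_δ(V_E,V_G), d_δ(V_G,V_F)} for all V_E, V_F, V_G ∈ 𝒱(•,δ). -/

import Mathlib

open Filter Topology TopologicalSpace Set Polynomial

noncomputable section

namespace PaperPCZar

variable {K : Type*} [Field K]

/-- `expNeg γ = e^{-γ}` for `γ ∈ ℝ ∪ {∞}`, with `e^{-∞} = 0`. -/
def expNeg (γ : WithTop ℝ) : ℝ := WithTop.recTopCoe 0 (fun r => Real.exp (-r)) γ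

/-- `v` is a rank-one (i.e. nontrivial, real-valued) valuation. -/
def IsRankOne (v : AddValuation K (WithTop ℝ)) : Prop := ∃ x : K, v x ≠ 0 ∧ v x ≠ ⊤

/-- The value group `Γ_v` of `v`, as a subset of `ℝ`. -/
def valueGroup (v : AddValuation K (WithTop ℝ)) : Set ℝ := {r : ℝ | ∃ x : K, v x = (r : WithTop ℝ)}

/-- `ℚΓ_v = {q·γ : q ∈ ℚ, γ ∈ Γ_v}`, the divisible hull of the value group inside `ℝ`. -/
def QGamma (v : AddValuation K (WithTop ℝ)) : Set ℝ :=
  {r : ℝ | ∃ (q : ℚ) (γ : ℝ), γ ∈ valueGroup v ∧ r = q * γ}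

/-- Order convergence of a sequence in `ℝ ∪ {∞}` to `γ`. -/
def OrdLim (f : ℕ → WithTop ℝ) (γ : WithTop ℝ) : Prop :=
  (∀ a : WithTop ℝ, a < γ → ∀ᶠ n in atTop, a < f n) ∧
  (∀ b : WithTop ℝ, γ < b → ∀ᶠ n in atTop, f n < b)

/-- `s` is a pseudo-convergent sequence with respect to `v`. -/
def IsPC (v : AddValuation K (WithTop ℝ)) (s : ℕ → K) : Prop :=
  ∀ n, v (s (n + 1) - s n) < v (s (n + 2) - s (n + 1))

/-- `s` is a pseudo-divergent sequence with respect to `v`. -/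
def IsPD (v : AddValuation K (WithTop ℝ)) (s : ℕ → K) : Prop :=
  ∀ n, v (s (n + 1) - s (n + 2)) < v (s n - s (n + 1))

/-- `s` is a pseudo-stationary sequence with respect to `v`. -/
def IsPS (v : AddValuation K (WithTop ℝ)) (s : ℕ → K) : Prop :=
  ∀ n m n' m' : ℕ, n ≠ m → n' ≠ m' → v (s n - s m) = v (s n' - s m')

/-- `δ ∈ ℝ ∪ {∞}` is the breadth of the sequence `s`, i.e. `δ = lim_n v(s_{n+1} - s_n)`. -/
def IsBreadth (v : AddValuation K (WithTop ℝ)) (s : ℕ → K) (δ : WithTop ℝ) : Prop :=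
  OrdLim (fun n => v (s (n + 1) - s n)) δ

/-- `α ∈ K` is a pseudo-limit of the pseudo-convergent sequence `s`. -/
def IsPCLimit (v : AddValuation K (WithTop ℝ)) (s : ℕ → K) (α : K) : Prop :=
  ∀ n, v (α - s n) < v (α - s (n + 1))

/-- `α ∈ K` is a pseudo-limit of the pseudo-divergent sequence `s`. -/
def IsPDLimit (v : AddValuation K (WithTop ℝ)) (s : ℕ → K) (α : K) : Prop :=
  ∀ n, v (α - s (n + 1)) < v (α - s n)

/-- `β ∈ K̄` is a pseudo-limit of `s ⊆ K` with respect to an extension `u` of `v`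
to the algebraic closure of `K`. -/
def IsPCLimitAC (u : AddValuation (AlgebraicClosure K) (WithTop ℝ)) (s : ℕ → K)
    (β : AlgebraicClosure K) : Prop :=
  ∀ n, u (β - algebraMap K (AlgebraicClosure K) (s n)) <
    u (β - algebraMap K (AlgebraicClosure K) (s (n + 1)))

/-- `s` is of transcendental type: for every polynomial `f`, `v(f(s_n))` eventually
stabilizes. -/
def IsTranscendentalType (v : AddValuation K (WithTop ℝ)) (s : ℕ → K) : Prop :=
  ∀ f : Polynomial K, ∃ N, ∀ n ≥ N, v (f.eval (s n)) = v (f.eval (s N))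

/-- The ultrametric distance `d(x,y) = e^{-v(x-y)}` on `K`. -/
def dK (v : AddValuation K (WithTop ℝ)) (x y : K) : ℝ := expNeg (v (x - y))

/-- The set `V_E = {φ ∈ K(X) : φ(s_n) ∈ V for all but finitely many n}`. -/
def VESet (v : AddValuation K (WithTop ℝ)) (s : ℕ → K) : Set (RatFunc K) :=
  {φ : RatFunc K | ∀ᶠ n in atTop, 0 ≤ v (RatFunc.eval (RingHom.id K) (s n) φ)}

/-- `Zar(K(X)|V)`: the valuation subrings of `K(X)` containing (the image of) `V`. -/
def ZarSet (v : AddValuation K (WithTop ℝ)) : Set (ValuationSubring (RatFunc K)) :=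
  {W | ∀ x : K, 0 ≤ v x → algebraMap K (RatFunc K) x ∈ W}

/-- `𝒱`: valuation subrings of `K(X)` of the form `V_E`, `E` pseudo-convergent. -/
def VV (v : AddValuation K (WithTop ℝ)) : Set (ValuationSubring (RatFunc K)) :=
  {W | ∃ s : ℕ → K, IsPC v s ∧ (W : Set (RatFunc K)) = VESet v s}

/-- `𝒱(•,δ)`: those `V_E` with `E` pseudo-convergent of breadth `δ`. -/
def VVδ (v : AddValuation K (WithTop ℝ)) (δ : WithTop ℝ) : Set (ValuationSubring (RatFunc K)) :=
  {W | ∃ s : ℕ → K, IsPC v s ∧ IsBreadth v s δ ∧ (W : Set (RatFunc K)) = VESet v s}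

/-- `𝒱_K(•,δ)`: those `V_E` with `E` pseudo-convergent of breadth `δ` having a
pseudo-limit in `K`. -/
def VVKδ (v : AddValuation K (WithTop ℝ)) (δ : WithTop ℝ) : Set (ValuationSubring (RatFunc K)) :=
  {W | ∃ s : ℕ → K, IsPC v s ∧ IsBreadth v s δ ∧ (∃ α : K, IsPCLimit v s α) ∧
    (W : Set (RatFunc K)) = VESet v s}

/-- `𝒱(β,•)`: those `V_E` with `E` pseudo-convergent having `β ∈ K̄` as a pseudo-limit
with respect to `u`. -/
def VVβ (v : AddValuation K (WithTop ℝ)) (u : AddValuation (AlgebraicClosure K) (WithTop ℝ))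
    (β : AlgebraicClosure K) : Set (ValuationSubring (RatFunc K)) :=
  {W | ∃ s : ℕ → K, IsPC v s ∧ IsPCLimitAC u s β ∧ (W : Set (RatFunc K)) = VESet v s}

/-- `𝒱(β,•)` for a pseudo-limit `β ∈ K`. -/
def VVβK (v : AddValuation K (WithTop ℝ)) (β : K) : Set (ValuationSubring (RatFunc K)) :=
  {W | ∃ s : ℕ → K, IsPC v s ∧ IsPCLimit v s β ∧ (W : Set (RatFunc K)) = VESet v s}

/-- `𝒱_div`: those `V_E` with `E` pseudo-divergent. -/
def VVdiv (v : AddValuation K (WithTop ℝ)) : Set (ValuationSubring (RatFunc K)) :=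
  {W | ∃ s : ℕ → K, IsPD v s ∧ (W : Set (RatFunc K)) = VESet v s}

/-- `𝒱_div(•,δ)`: those `V_E` with `E` pseudo-divergent of breadth `δ`. -/
def VVdivδ (v : AddValuation K (WithTop ℝ)) (δ : WithTop ℝ) : Set (ValuationSubring (RatFunc K)) :=
  {W | ∃ s : ℕ → K, IsPD v s ∧ IsBreadth v s δ ∧ (W : Set (RatFunc K)) = VESet v s}

/-- `𝒱_div(β,•)`: those `V_E` with `E` pseudo-divergent having `β ∈ K` as a pseudo-limit. -/
def VVdivβ (v : AddValuation K (WithTop ℝ)) (β : K) : Set (ValuationSubring (RatFunc K)) :=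
  {W | ∃ s : ℕ → K, IsPD v s ∧ IsPDLimit v s β ∧ (W : Set (RatFunc K)) = VESet v s}

/-- `𝒱_stat(•,δ)`: those `V_E` with `E` pseudo-stationary of breadth `δ`. -/
def VVstatδ (v : AddValuation K (WithTop ℝ)) (δ : WithTop ℝ) :
    Set (ValuationSubring (RatFunc K)) :=
  {W | ∃ s : ℕ → K, (∀ n m : ℕ, n ≠ m → v (s n - s m) = δ) ∧
    (W : Set (RatFunc K)) = VESet v s}

/-- `𝒱_stat(β,•)`: those `V_E` with `E` pseudo-stationary having `β` as a pseudo-limit. -/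
def VVstatβ (v : AddValuation K (WithTop ℝ)) (β : K) : Set (ValuationSubring (RatFunc K)) :=
  {W | ∃ (s : ℕ → K) (δ : WithTop ℝ), (∀ n m : ℕ, n ≠ m → v (s n - s m) = δ) ∧
    (∀ n, δ ≤ v (β - s n)) ∧ (W : Set (RatFunc K)) = VESet v s}

/-- The Zariski topology on the valuation subrings of a field `L`, generated by the
sets `B(φ) = {W : φ ∈ W}`. -/
def zarTop (L : Type*) [Field L] : TopologicalSpace (ValuationSubring L) :=
  generateFrom {U | ∃ φ : L, U = {W : ValuationSubring L | φ ∈ W}}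

/-- The constructible topology on the valuation subrings of a field `L`: the coarsest
topology in which all finite intersections `B(φ₁) ∩ ⋯ ∩ B(φ_k)` are open and closed. -/
def consTop (L : Type*) [Field L] : TopologicalSpace (ValuationSubring L) :=
  generateFrom {U | ∃ T : Finset L, U = {W : ValuationSubring L | ∀ φ ∈ T, φ ∈ W} ∨
    U = {W : ValuationSubring L | ∀ φ ∈ T, φ ∈ W}ᶜ}

/-- The subspace Zariski topology on a set of valuation subrings. -/
def zarSub {L : Type*} [Field L] (S : Set (ValuationSubring L)) : TopologicalSpace ↥S :=
  (zarTop L).induced Subtype.val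

/-- The subspace constructible topology on a set of valuation subrings. -/
def consSub {L : Type*} [Field L] (S : Set (ValuationSubring L)) : TopologicalSpace ↥S :=
  (consTop L).induced Subtype.val

/-- `d` is a metric on `X` inducing the topology `t`. -/
def MetrizedBy {X : Type*} (t : TopologicalSpace X) (d : X → X → ℝ) : Prop :=
  (∀ x y, d x y = d y x) ∧ (∀ x y, d x y = 0 ↔ x = y) ∧
  (∀ x y z, d x z ≤ d x y + d y z) ∧
  t = generateFrom {U : Set X | ∃ (x : X) (ε : ℝ), 0 < ε ∧ U = {y | d x y < ε}}

/-- The topology `t` is metrizable. -/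
def IsMetrizable {X : Type*} (t : TopologicalSpace X) : Prop := ∃ d, MetrizedBy t d

/-- The topology `t` is induced by an ultrametric. -/
def IsUltrametrizable {X : Type*} (t : TopologicalSpace X) : Prop :=
  ∃ d, MetrizedBy t d ∧ ∀ x y z, d x z ≤ max (d x y) (d y z)

/-- `dd` computes the distance `d_δ` on `𝒱(•,δ)`:
`d_δ(V_E, V_F) = lim_n max (d(s_n,t_n) - e^{-δ}) 0`. -/
def IsDistδ (v : AddValuation K (WithTop ℝ)) (δ : WithTop ℝ)
    (dd : ValuationSubring (RatFunc K) → ValuationSubring (RatFunc K) → ℝ) : Prop :=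
  ∀ (W W' : ValuationSubring (RatFunc K)) (s t : ℕ → K),
    IsPC v s → IsBreadth v s δ → (W : Set (RatFunc K)) = VESet v s →
    IsPC v t → IsBreadth v t δ → (W' : Set (RatFunc K)) = VESet v t →
    Tendsto (fun n => max (dK v (s n) (t n) - expNeg δ) 0) atTop (𝓝 (dd W W'))

/-- The `Λ`-upper limit topology on the interval `(-∞, b] ⊆ ℝ ∪ {∞}`, generated by the
half-open intervals `(α, λ]` with `λ ∈ Λ ∪ {∞}`. -/
def upperTopWT (b : WithTop ℝ) (Λ : Set ℝ) : TopologicalSpace {γ : WithTop ℝ // γ ≤ b} :=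
  generateFrom {U | ∃ α lam : WithTop ℝ, α ≤ b ∧
    (lam = ⊤ ∨ ∃ r ∈ Λ, lam = (r : WithTop ℝ)) ∧
    U = {γ : {γ : WithTop ℝ // γ ≤ b} | α < (γ : WithTop ℝ) ∧ (γ : WithTop ℝ) ≤ lam}}

/-- The `Λ`-upper limit topology on `(-∞, +∞] = ℝ ∪ {∞}`. -/
def upperTopAll (Λ : Set ℝ) : TopologicalSpace (WithTop ℝ) :=
  generateFrom {U | ∃ α lam : WithTop ℝ,
    (lam = ⊤ ∨ ∃ r ∈ Λ, lam = (r : WithTop ℝ)) ∧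
    U = {γ : WithTop ℝ | α < γ ∧ γ ≤ lam}}

/-- The `Λ`-upper limit topology on an interval `(a, b]` of `ℝ ∪ {±∞}`. -/
def upperTopE (a b : EReal) (Λ : Set ℝ) : TopologicalSpace {x : EReal // a < x ∧ x ≤ b} :=
  generateFrom {U | ∃ α lam : EReal, (a < α ∧ α ≤ b) ∧
    (lam = ⊤ ∨ ∃ r ∈ Λ, lam = (r : EReal)) ∧
    U = {x : {x : EReal // a < x ∧ x ≤ b} | α < (x : EReal) ∧ (x : EReal) ≤ lam}}


/-- `𝒲`: the valuation domains of the valuations `w_E : φ ↦ lim_n v(φ(s_n))`, as `E`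
ranges over the pseudo-convergent sequences for which `w_E` is a valuation. -/
def WW (v : AddValuation K (WithTop ℝ)) : Set (ValuationSubring (RatFunc K)) :=
  {W | ∃ (s : ℕ → K) (w : AddValuation (RatFunc K) (WithTop ℝ)), IsPC v s ∧
    (∀ φ : RatFunc K, OrdLim (fun n => v (RatFunc.eval (RingHom.id K) (s n) φ)) (w φ)) ∧
    (W : Set (RatFunc K)) = {φ : RatFunc K | 0 ≤ w φ}}

/- ===== auxiliary machinery ===== -/



-- basic WithTop ℝ helpers
lemma wt_real_of_ne_top {x : WithTop ℝ} (h : x ≠ ⊤) : ∃ r : ℝ, x = (r : WithTop ℝ) := by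
  obtain ⟨r, hr⟩ := WithTop.ne_top_iff_exists.mp h
  exact ⟨r, hr.symm⟩

lemma v_real (v : AddValuation K (WithTop ℝ)) {a : K} (ha : a ≠ 0) :
    ∃ r : ℝ, v a = (r : WithTop ℝ) :=
  wt_real_of_ne_top (v.ne_top_iff.mpr ha)

lemma wt_eq_zero_of_nonneg_add {x y : WithTop ℝ} (hx : 0 ≤ x) (hy : 0 ≤ y)
    (h : x + y = 0) : x = 0 := by
  rcases eq_or_lt_of_le hx with h0 | h0
  · exact h0.symm
  · exfalso
    have : (0 : WithTop ℝ) < x + y := lt_of_lt_of_le h0 (le_add_of_nonneg_right hy)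
    rw [h] at this; exact lt_irrefl _ this

-- the subring A
def Asub (v : AddValuation K (WithTop ℝ)) : Subring (AlgebraicClosure K) where
  carrier := {x | ∃ a : K, 0 ≤ v a ∧ algebraMap K (AlgebraicClosure K) a = x}
  zero_mem' := ⟨0, by simp, map_zero _⟩
  one_mem' := ⟨1, by simp, map_one _⟩
  add_mem' := by
    rintro x y ⟨a, ha, rfl⟩ ⟨b, hb, rfl⟩
    exact ⟨a + b, le_trans (le_min ha hb) (v.map_add a b), (map_add _ _ _)⟩
  mul_mem' := by
    rintro x y ⟨a, ha, rfl⟩ ⟨b, hb, rfl⟩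
    exact ⟨a * b, by rw [v.map_mul]; exact add_nonneg ha hb, (map_mul _ _ _)⟩
  neg_mem' := by
    rintro x ⟨a, ha, rfl⟩
    exact ⟨-a, by rwa [v.map_neg], (map_neg _ _)⟩

lemma mem_Asub (v : AddValuation K (WithTop ℝ)) {a : K} (h : 0 ≤ v a) :
    algebraMap K (AlgebraicClosure K) a ∈ Asub v := ⟨a, h, rfl⟩

lemma Asub_isLocal (v : AddValuation K (WithTop ℝ)) : IsLocalRing (Asub v) := by
  have hinj := (algebraMap K (AlgebraicClosure K)).injective
  have : Nontrivial (Asub v) := by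
    refine ⟨0, 1, fun h => ?_⟩
    have : ((0 : Asub v) : AlgebraicClosure K) = ((1 : Asub v) : AlgebraicClosure K) := by
      rw [h]
    simp at this
  apply IsLocalRing.of_isUnit_or_isUnit_one_sub_self
  rintro ⟨x, a, ha, rfl⟩
  by_cases h0 : v a = 0
  · left
    have ha' : a ≠ 0 := fun h => by simp [h, v.map_zero] at h0
    refine isUnit_iff_exists_inv.mpr ⟨⟨algebraMap K _ a⁻¹, a⁻¹, ?_, rfl⟩, ?_⟩
    · rw [v.map_inv, h0]; simp
    · ext
      simp only [Subring.coe_mul, Subring.coe_one]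
      rw [← map_mul, mul_inv_cancel₀ ha', map_one]
  · right
    have h1 : v (1 - a) = 0 := by
      have hne : v (1 : K) ≠ v (-a) := by
        rw [v.map_one, v.map_neg]
        exact fun h => h0 h.symm
      have := v.map_add_of_distinct_val hne
      rw [v.map_one, v.map_neg] at this
      have h1a : (1 : K) + -a = 1 - a := by ring
      rw [h1a] at this
      rw [this, min_eq_left ha]
    have ha' : (1 : K) - a ≠ 0 := fun h => by simp [h, v.map_zero] at h1
    have hmem : (1 : Asub v) - ⟨algebraMap K _ a, a, ha, rfl⟩ =
        ⟨algebraMap K _ (1 - a), 1 - a, h1.ge, rfl⟩ := by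
      ext; simp
    rw [hmem]
    refine isUnit_iff_exists_inv.mpr ⟨⟨algebraMap K _ (1 - a)⁻¹, (1 - a)⁻¹, ?_, rfl⟩, ?_⟩
    · rw [v.map_inv, h1]; simp
    · ext
      simp only [Subring.coe_mul, Subring.coe_one]
      rw [← map_mul, mul_inv_cancel₀ ha', map_one]



lemma exists_good_W (v : AddValuation K (WithTop ℝ)) :
    ∃ W : ValuationSubring (AlgebraicClosure K),
      ∀ a : K, 0 ≤ v a ↔ algebraMap K (AlgebraicClosure K) a ∈ W := by
  classical
  have hloc : IsLocalRing (Asub v) := Asub_isLocal v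
  obtain ⟨W, hsub, hlochom⟩ :=
    (LocalSubring.mk (Asub v)).exists_le_valuationSubring
  refine ⟨W, fun a => ⟨fun ha => hsub (mem_Asub v ha), fun ha => ?_⟩⟩
  by_contra hneg
  have ha0 : a ≠ 0 := by
    rintro rfl
    rw [v.map_zero] at hneg
    exact hneg le_top
  have hainv : 0 ≤ v a⁻¹ := by
    rw [v.map_inv]
    obtain ⟨r, hr⟩ := v_real v ha0
    rw [hr] at hneg ⊢
    have hrneg : r < 0 := by exact_mod_cast not_le.mp hneg
    have hcast : -((r : ℝ) : WithTop ℝ) = ((-r : ℝ) : WithTop ℝ) := rfl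
    rw [hcast]
    exact_mod_cast (neg_nonneg.mpr hrneg.le)
  -- a⁻¹ image is in Asub, and is a unit in W
  have hmemA : algebraMap K (AlgebraicClosure K) a⁻¹ ∈ Asub v := mem_Asub v hainv
  have hUnitW : IsUnit (Subring.inclusion hsub ⟨_, hmemA⟩ : W.toLocalSubring.toSubring) := by
    refine isUnit_iff_exists_inv.mpr ⟨⟨algebraMap K _ a, ha⟩, ?_⟩
    ext
    show (algebraMap K (AlgebraicClosure K) a⁻¹) * (algebraMap K (AlgebraicClosure K) a) = 1
    rw [← map_mul, inv_mul_cancel₀ ha0, map_one]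
  have hUnitA : IsUnit (⟨_, hmemA⟩ : Asub v) := hlochom.map_nonunit _ hUnitW
  obtain ⟨c, hc⟩ := isUnit_iff_exists_inv.mp hUnitA
  obtain ⟨b, hb, hbc⟩ := c.2
  have : a⁻¹ * b = 1 := by
    have := congrArg (Subtype.val) hc
    simp only [Subring.coe_mul, Subring.coe_one] at this
    rw [← hbc, ← map_mul] at this
    exact (algebraMap K (AlgebraicClosure K)).injective (by rw [this, map_one])
  have : b = a := by field_simp at this; linear_combination this
  exact hneg (this ▸ hb)


section Uval
variable (v : AddValuation K (WithTop ℝ)) (W : ValuationSubring (AlgebraicClosure K))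

lemma aM_ne_zero {a : K} (ha : a ≠ 0) : algebraMap K (AlgebraicClosure K) a ≠ 0 :=
  fun h => ha ((algebraMap K (AlgebraicClosure K)).injective (by rw [h, map_zero]))

lemma valW_ne_zero {x : AlgebraicClosure K} (hx : x ≠ 0) : W.valuation x ≠ 0 :=
  fun h => hx ((Valuation.zero_iff _).mp h)

lemma nsmul_coe (n : ℕ) (r : ℝ) : n • ((r : WithTop ℝ)) = (((n : ℝ) * r : ℝ) : WithTop ℝ) := by
  induction n with
  | zero => simp
  | succ n ih =>
    rw [succ_nsmul, ih, ← WithTop.coe_add, WithTop.coe_eq_coe]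
    push_cast
    ring

lemma v_pow_real {a : K} {r : ℝ} (hr : v a = (r : WithTop ℝ)) (n : ℕ) :
    v (a ^ n) = (((n : ℝ) * r : ℝ) : WithTop ℝ) := by
  rw [v.map_pow, hr, nsmul_coe]

lemma wt_sub_nonneg (x : WithTop ℝ) (r : ℝ) : 0 ≤ x - (r : WithTop ℝ) ↔ (r : WithTop ℝ) ≤ x := by
  induction x using WithTop.recTopCoe with
  | top =>
    have h : ((⊤ : WithTop ℝ) - (r : WithTop ℝ)) = ⊤ := rfl
    simp [h, le_top]
  | coe a =>
    have h : ((a : WithTop ℝ) - (r : WithTop ℝ)) = ((a - r : ℝ) : WithTop ℝ) := rfl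
    rw [h]
    constructor
    · intro hle
      have : (0:ℝ) ≤ a - r := by exact_mod_cast hle
      exact_mod_cast (sub_nonneg.mp this)
    · intro hle
      have : r ≤ a := by exact_mod_cast hle
      exact_mod_cast (sub_nonneg.mpr this)

variable (hW : ∀ a : K, 0 ≤ v a ↔ algebraMap K (AlgebraicClosure K) a ∈ W)
include hW

lemma bridge_le {b c : K} (hb : b ≠ 0) (hc : c ≠ 0) :
    W.valuation (algebraMap K (AlgebraicClosure K) b)
      ≤ W.valuation (algebraMap K (AlgebraicClosure K) c) ↔ v c ≤ v b := by
  have hcpos : (0 : W.ValueGroup) < W.valuation (algebraMap K (AlgebraicClosure K) c) :=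
    (zero_lt_iff).mpr (valW_ne_zero W (aM_ne_zero hc))
  have h1 : W.valuation (algebraMap K (AlgebraicClosure K) (b / c)) =
      W.valuation (algebraMap K (AlgebraicClosure K) b)
        / W.valuation (algebraMap K (AlgebraicClosure K) c) := by
    rw [map_div₀, map_div₀]
  have h2 : v (b / c) = v b - v c := v.map_div
  constructor
  · intro h
    have hle1 : W.valuation (algebraMap K (AlgebraicClosure K) (b/c)) ≤ 1 := by
      rw [h1]; exact (div_le_one₀ hcpos).mpr h
    have := (hW (b/c)).mpr (W.mem_of_valuation_le_one _ hle1)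
    rw [h2] at this
    obtain ⟨rc, hrc⟩ := v_real v hc
    rw [hrc] at this ⊢
    exact (wt_sub_nonneg _ _).mp this
  · intro h
    have h0 : 0 ≤ v (b / c) := by
      rw [h2]
      obtain ⟨rc, hrc⟩ := v_real v hc
      rw [hrc] at h ⊢
      exact (wt_sub_nonneg _ _).mpr h
    have := (W.valuation_le_one_iff _).mpr ((hW _).mp h0)
    rw [h1] at this
    exact (div_le_one₀ hcpos).mp this

lemma bridge_eq {b c : K} (hb : b ≠ 0) (hc : c ≠ 0)
    (h : W.valuation (algebraMap K (AlgebraicClosure K) b)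
       = W.valuation (algebraMap K (AlgebraicClosure K) c)) : v b = v c :=
  le_antisymm ((bridge_le v W hW hc hb).mp h.ge) ((bridge_le v W hW hb hc).mp h.le)

omit hW

/-- The defining property for the extension value. -/
def PP (x : AlgebraicClosure K) (m : ℕ) (a : K) : Prop :=
  0 < m ∧ a ≠ 0 ∧ (W.valuation x) ^ m = W.valuation (algebraMap K (AlgebraicClosure K) a)

lemma hex (x : AlgebraicClosure K) (hx : x ≠ 0) : ∃ (m : ℕ) (a : K), PP W x m a := by
  classical
  obtain ⟨p, hp0, hpx⟩ :=
    (Algebra.IsAlgebraic.isAlgebraic (R := K) (A := AlgebraicClosure K) x)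
  set F := Finset.range (p.natDegree + 1) with hF
  set z : ℕ → AlgebraicClosure K :=
    fun i => algebraMap K (AlgebraicClosure K) (p.coeff i) * x ^ i with hz
  have hsum : ∑ i ∈ F, z i = 0 := by
    have h := Polynomial.eval₂_eq_sum_range (p := p) (algebraMap K (AlgebraicClosure K)) x
    rw [Polynomial.aeval_def] at hpx
    exact h.symm.trans hpx
  have hFne : F.Nonempty := ⟨0, by simp [hF]⟩
  obtain ⟨i₀, hi₀F, hmax⟩ := F.exists_max_image (fun i => W.valuation (z i)) hFne
  have hzi₀ : W.valuation (z i₀) ≠ 0 := by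
    intro h0
    have hlt : p.natDegree ∈ F := by simp [hF]
    have hv0 : W.valuation (z p.natDegree) = 0 :=
      le_antisymm (le_trans (hmax _ hlt) h0.le) zero_le'
    have hznz : z p.natDegree ≠ 0 :=
      mul_ne_zero (aM_ne_zero (Polynomial.leadingCoeff_ne_zero.mpr hp0)) (pow_ne_zero _ hx)
    exact valW_ne_zero W hznz hv0
  have hzi₀ne : z i₀ ≠ 0 := fun h => hzi₀ (by rw [h, map_zero])
  have hj : ∃ j ∈ F, j ≠ i₀ ∧ W.valuation (z j) = W.valuation (z i₀) := by
    by_contra hcon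
    push_neg at hcon
    have hlt : ∀ j ∈ F.erase i₀, W.valuation (z j) < W.valuation (z i₀) := by
      intro j hjmem
      exact lt_of_le_of_ne (hmax _ (Finset.mem_of_mem_erase hjmem))
        (hcon j (Finset.mem_of_mem_erase hjmem) (Finset.ne_of_mem_erase hjmem))
    have hsum' : z i₀ = -∑ j ∈ F.erase i₀, z j := by
      have h := Finset.add_sum_erase F z hi₀F
      rw [hsum] at h
      linear_combination h
    have hcontra : W.valuation (z i₀) < W.valuation (z i₀) := by
      conv_lhs => rw [hsum', Valuation.map_neg]
      exact Valuation.map_sum_lt _ hzi₀ hlt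
    exact lt_irrefl _ hcontra
  obtain ⟨j, hjF, hjne, hjeq⟩ := hj
  have hzjne : z j ≠ 0 := fun h => hzi₀ (by rw [← hjeq, h, map_zero])
  have hcj : p.coeff j ≠ 0 := fun h => hzjne (by simp [hz, h])
  have hci₀ : p.coeff i₀ ≠ 0 := fun h => hzi₀ne (by simp [hz, h])
  have hvx : W.valuation x ≠ 0 := valW_ne_zero W hx
  have main : ∀ i2 m : ℕ, 0 < m → W.valuation (z (i2 + m)) = W.valuation (z i2) →
      p.coeff (i2 + m) ≠ 0 → p.coeff i2 ≠ 0 → ∃ (m' : ℕ) (a : K), PP W x m' a := by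
    intro i2 m hm heq hc1 hc2
    refine ⟨m, p.coeff i2 / p.coeff (i2 + m), hm, div_ne_zero hc2 hc1, ?_⟩
    have hAne : W.valuation (algebraMap K (AlgebraicClosure K) (p.coeff (i2 + m))) ≠ 0 :=
      valW_ne_zero W (aM_ne_zero hc1)
    have hxj : (W.valuation x) ^ i2 ≠ 0 := pow_ne_zero _ hvx
    have h1 : W.valuation (algebraMap K (AlgebraicClosure K) (p.coeff (i2 + m)))
        * ((W.valuation x) ^ i2 * (W.valuation x) ^ m)
        = W.valuation (algebraMap K (AlgebraicClosure K) (p.coeff i2))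
          * (W.valuation x) ^ i2 := by
      have h := heq
      simp only [hz, Valuation.map_mul, Valuation.map_pow, pow_add] at h
      exact h
    have h2 : (W.valuation (algebraMap K (AlgebraicClosure K) (p.coeff (i2 + m)))
        * (W.valuation x) ^ m) * (W.valuation x) ^ i2
        = W.valuation (algebraMap K (AlgebraicClosure K) (p.coeff i2))
          * (W.valuation x) ^ i2 := by
      rw [← h1, mul_assoc, mul_comm ((W.valuation x) ^ m) ((W.valuation x) ^ i2)]
    have h3 := mul_right_cancel₀ hxj h2
    show (W.valuation x) ^ m = W.valuation (algebraMap K (AlgebraicClosure K)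
      (p.coeff i2 / p.coeff (i2 + m)))
    rw [map_div₀, map_div₀, eq_div_iff hAne, mul_comm]
    exact h3
  rcases lt_or_gt_of_ne hjne with hlt | hlt
  · exact main j (i₀ - j) (by omega) (by rw [show j + (i₀ - j) = i₀ by omega]; exact hjeq.symm)
      (by rw [show j + (i₀ - j) = i₀ by omega]; exact hci₀) hcj
  · exact main i₀ (j - i₀) (by omega) (by rw [show i₀ + (j - i₀) = j by omega]; exact hjeq)
      (by rw [show i₀ + (j - i₀) = j by omega]; exact hcj) hci₀

end Uval

section Uval2
variable (v : AddValuation K (WithTop ℝ)) (W : ValuationSubring (AlgebraicClosure K))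

lemma gwz_pow_le_pow_iff {Γ : Type*} [LinearOrderedCommGroupWithZero Γ] {a b : Γ} {n : ℕ}
    (hn : n ≠ 0) : a ^ n ≤ b ^ n ↔ a ≤ b := by
  constructor
  · intro h
    by_contra hba
    exact absurd h (not_le.mpr (pow_lt_pow_left₀ (not_le.mp hba) zero_le' hn))
  · intro h
    exact pow_le_pow_left₀ zero_le' h n

open Classical in
/-- The extension of `v` to the algebraic closure, via `W`. -/
noncomputable def uval (x : AlgebraicClosure K) : WithTop ℝ :=
  if h : ∃ p : ℕ × K, PP W x p.1 p.2 then
    (((WithTop.untopD 0 (v (Classical.choose h).2)) / ((Classical.choose h).1 : ℝ) : ℝ) : WithTop ℝ)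
  else ⊤

variable (hW : ∀ a : K, 0 ≤ v a ↔ algebraMap K (AlgebraicClosure K) a ∈ W)
include hW

lemma uval_eq {x : AlgebraicClosure K} {m : ℕ} {a : K} (h : PP W x m a) :
    uval v W x = (((WithTop.untopD 0 (v a)) / (m : ℝ) : ℝ) : WithTop ℝ) := by
  obtain ⟨hm, ha, hxa⟩ := h
  have hEx : ∃ p : ℕ × K, PP W x p.1 p.2 := ⟨(m, a), hm, ha, hxa⟩
  rw [uval, dif_pos hEx]
  obtain ⟨hm', ha', hxa'⟩ := Classical.choose_spec hEx
  set m' := (Classical.choose hEx).1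
  set a' := (Classical.choose hEx).2
  obtain ⟨ra, hra⟩ := v_real v ha
  obtain ⟨ra', hra'⟩ := v_real v ha'
  rw [hra, hra', WithTop.untopD_coe, WithTop.untopD_coe, WithTop.coe_eq_coe]
  -- relation between (m, ra) and (m', ra')
  have hkey : W.valuation (algebraMap K (AlgebraicClosure K) (a ^ m'))
      = W.valuation (algebraMap K (AlgebraicClosure K) (a' ^ m)) := by
    rw [map_pow, map_pow, map_pow, map_pow, ← hxa, ← hxa', ← pow_mul, ← pow_mul, mul_comm]
  have := bridge_eq v W hW (pow_ne_zero _ ha) (pow_ne_zero _ ha') hkey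
  rw [v_pow_real v hra m', v_pow_real v hra' m, WithTop.coe_eq_coe] at this
  have hm0 : (m : ℝ) ≠ 0 := Nat.cast_ne_zero.mpr hm.ne'
  have hm'0 : (m' : ℝ) ≠ 0 := Nat.cast_ne_zero.mpr hm'.ne'
  field_simp
  linarith [this]

omit hW

lemma uval_zero : uval v W 0 = ⊤ := by
  rw [uval, dif_neg]
  rintro ⟨⟨m, a⟩, hm, ha, hxa⟩
  rw [Valuation.map_zero, zero_pow hm.ne'] at hxa
  exact valW_ne_zero W (aM_ne_zero ha) hxa.symm

include hW

lemma uval_coe (a : K) : uval v W (algebraMap K (AlgebraicClosure K) a) = v a := by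
  by_cases ha : a = 0
  · rw [ha, map_zero, uval_zero, v.map_zero]
  · have hPP : PP W (algebraMap K (AlgebraicClosure K) a) 1 a := ⟨one_pos, ha, by rw [pow_one]⟩
    rw [uval_eq v W hW hPP]
    obtain ⟨ra, hra⟩ := v_real v ha
    rw [hra, WithTop.untopD_coe]
    norm_num

lemma uval_real {x : AlgebraicClosure K} (hx : x ≠ 0) :
    ∃ r : ℝ, uval v W x = (r : WithTop ℝ) := by
  obtain ⟨m, a, hPP⟩ := hex W x hx
  exact ⟨_, uval_eq v W hW hPP⟩

lemma uval_mul (x y : AlgebraicClosure K) : uval v W (x * y) = uval v W x + uval v W y := by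
  by_cases hx : x = 0
  · rw [hx, zero_mul, uval_zero, top_add]
  by_cases hy : y = 0
  · rw [hy, mul_zero, uval_zero, add_top]
  obtain ⟨m, a, hm, ha, hxa⟩ := hex W x hx
  obtain ⟨m', a', hm', ha', hya'⟩ := hex W y hy
  have hPP : PP W (x * y) (m * m') (a ^ m' * a' ^ m) := by
    refine ⟨Nat.mul_pos hm hm', mul_ne_zero (pow_ne_zero _ ha) (pow_ne_zero _ ha'), ?_⟩
    rw [Valuation.map_mul, map_mul, Valuation.map_mul, map_pow, map_pow, map_pow, map_pow,
      ← hxa, ← hya', mul_pow, ← pow_mul, ← pow_mul, mul_comm m' m]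
  rw [uval_eq v W hW hPP, uval_eq v W hW ⟨hm, ha, hxa⟩, uval_eq v W hW ⟨hm', ha', hya'⟩]
  obtain ⟨ra, hra⟩ := v_real v ha
  obtain ⟨ra', hra'⟩ := v_real v ha'
  have hva : v (a ^ m' * a' ^ m) = (((m' : ℝ) * ra + (m : ℝ) * ra' : ℝ) : WithTop ℝ) := by
    rw [v.map_mul, v_pow_real v hra m', v_pow_real v hra' m, ← WithTop.coe_add]
  rw [hva, hra, hra', WithTop.untopD_coe, WithTop.untopD_coe, WithTop.untopD_coe,
    ← WithTop.coe_add, WithTop.coe_eq_coe]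
  have hm0 : (m : ℝ) ≠ 0 := Nat.cast_ne_zero.mpr hm.ne'
  have hm'0 : (m' : ℝ) ≠ 0 := Nat.cast_ne_zero.mpr hm'.ne'
  field_simp
  push_cast
  ring

lemma uval_le_iff {x y : AlgebraicClosure K} (hx : x ≠ 0) (hy : y ≠ 0) :
    uval v W x ≤ uval v W y ↔ W.valuation y ≤ W.valuation x := by
  obtain ⟨m, a, hm, ha, hxa⟩ := hex W x hx
  obtain ⟨m', a', hm', ha', hya'⟩ := hex W y hy
  obtain ⟨ra, hra⟩ := v_real v ha
  obtain ⟨ra', hra'⟩ := v_real v ha'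
  rw [uval_eq v W hW ⟨hm, ha, hxa⟩, uval_eq v W hW ⟨hm', ha', hya'⟩, hra, hra',
    WithTop.untopD_coe, WithTop.untopD_coe, WithTop.coe_le_coe]
  have hm0 : (0 : ℝ) < (m : ℝ) := Nat.cast_pos.mpr hm
  have hm'0 : (0 : ℝ) < (m' : ℝ) := Nat.cast_pos.mpr hm'
  rw [div_le_div_iff₀ hm0 hm'0]
  have hval : W.valuation y ≤ W.valuation x ↔
      W.valuation (algebraMap K (AlgebraicClosure K) (a' ^ m))
        ≤ W.valuation (algebraMap K (AlgebraicClosure K) (a ^ m')) := by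
    rw [map_pow, map_pow, map_pow, map_pow, ← hxa, ← hya', ← pow_mul, ← pow_mul, mul_comm m' m]
    exact (gwz_pow_le_pow_iff (Nat.mul_ne_zero hm.ne' hm'.ne')).symm
  rw [hval, bridge_le v W hW (pow_ne_zero _ ha') (pow_ne_zero _ ha),
    v_pow_real v hra m', v_pow_real v hra' m, WithTop.coe_le_coe]
  constructor
  · intro h; linarith
  · intro h; linarith

lemma uval_lt_iff {x y : AlgebraicClosure K} (hx : x ≠ 0) (hy : y ≠ 0) :
    uval v W x < uval v W y ↔ W.valuation y < W.valuation x := by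
  rw [lt_iff_not_ge, lt_iff_not_ge, uval_le_iff v W hW hy hx]

lemma uval_eq_of_val_eq {x y : AlgebraicClosure K} (hx : x ≠ 0) (hy : y ≠ 0)
    (h : W.valuation x = W.valuation y) : uval v W x = uval v W y :=
  le_antisymm ((uval_le_iff v W hW hx hy).mpr h.ge) ((uval_le_iff v W hW hy hx).mpr h.le)

lemma uval_neg (x : AlgebraicClosure K) : uval v W (-x) = uval v W x := by
  by_cases hx : x = 0
  · rw [hx, neg_zero]
  · exact uval_eq_of_val_eq v W hW (neg_ne_zero.mpr hx) hx (Valuation.map_neg _ _)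

lemma uval_add_min (x y : AlgebraicClosure K) :
    min (uval v W x) (uval v W y) ≤ uval v W (x + y) := by
  by_cases hx : x = 0
  · rw [hx, zero_add]; exact min_le_right _ _
  by_cases hy : y = 0
  · rw [hy, add_zero]; exact min_le_left _ _
  by_cases hxy : x + y = 0
  · rw [hxy, uval_zero]; exact le_top
  rcases le_total (uval v W x) (uval v W y) with h | h
  · rw [min_eq_left h]
    rw [uval_le_iff v W hW hx hy] at h
    have : W.valuation (x + y) ≤ W.valuation x := by
      calc W.valuation (x + y) ≤ max (W.valuation x) (W.valuation y) := Valuation.map_add _ _ _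
      _ = W.valuation x := max_eq_left h
    exact (uval_le_iff v W hW hx hxy).mpr this
  · rw [min_eq_right h]
    rw [uval_le_iff v W hW hy hx] at h
    have : W.valuation (x + y) ≤ W.valuation y := by
      calc W.valuation (x + y) ≤ max (W.valuation x) (W.valuation y) := Valuation.map_add _ _ _
      _ = W.valuation y := max_eq_right h
    exact (uval_le_iff v W hW hy hxy).mpr this

lemma uval_add_distinct {x y : AlgebraicClosure K} (h : uval v W x ≠ uval v W y) :
    uval v W (x + y) = min (uval v W x) (uval v W y) := by
  have main : ∀ x y : AlgebraicClosure K, uval v W x < uval v W y →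
      uval v W (x + y) = min (uval v W x) (uval v W y) := by
    intro x y hlt
    have hx : x ≠ 0 := by
      rintro rfl
      rw [uval_zero] at hlt
      exact not_top_lt hlt
    by_cases hy : y = 0
    · rw [hy, add_zero, uval_zero, min_eq_left le_top]
    have hvyx : W.valuation y < W.valuation x := (uval_lt_iff v W hW hx hy).mp hlt
    have hxy : x + y ≠ 0 := by
      rintro hsum
      have : y = -x := by linear_combination hsum
      rw [this, Valuation.map_neg] at hvyx
      exact lt_irrefl _ hvyx
    have hne : W.valuation x ≠ W.valuation y := hvyx.ne'
    have hval : W.valuation (x + y) = W.valuation x := by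
      rw [Valuation.map_add_of_distinct_val _ hne, max_eq_left hvyx.le]
    rw [uval_eq_of_val_eq v W hW hxy hx hval, min_eq_left hlt.le]
  rcases h.lt_or_gt with hlt | hlt
  · exact main x y hlt
  · rw [add_comm, min_comm]
    exact main y x hlt

lemma uval_prod (M : Multiset (AlgebraicClosure K)) :
    uval v W M.prod = (M.map (uval v W)).sum := by
  induction M using Multiset.induction_on with
  | empty =>
    simp only [Multiset.prod_zero, Multiset.map_zero, Multiset.sum_zero]
    rw [← (algebraMap K (AlgebraicClosure K)).map_one, uval_coe v W hW, v.map_one]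
  | cons a M ih =>
    rw [Multiset.prod_cons, Multiset.map_cons, Multiset.sum_cons, uval_mul v W hW, ih]

end Uval2


section Seq
variable (v : AddValuation K (WithTop ℝ)) (W : ValuationSubring (AlgebraicClosure K))

/-- real value of the consecutive-difference valuations -/
noncomputable def vsr (s : ℕ → K) (n : ℕ) : ℝ := WithTop.untopD 0 (v (s (n + 1) - s n))

variable {v}

lemma pc_ne_top {s : ℕ → K} (hs : IsPC v s) (n : ℕ) : v (s (n + 1) - s n) ≠ ⊤ :=
  ((hs n).trans_le le_top).ne

lemma vsr_coe {s : ℕ → K} (hs : IsPC v s) (n : ℕ) :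
    ((vsr v s n : ℝ) : WithTop ℝ) = v (s (n + 1) - s n) := by
  obtain ⟨r, hr⟩ := wt_real_of_ne_top (pc_ne_top hs n)
  rw [vsr, hr, WithTop.untopD_coe]

lemma wv_strictMono {s : ℕ → K} (hs : IsPC v s) :
    StrictMono (fun n => v (s (n + 1) - s n)) :=
  strictMono_nat_of_lt_succ (fun n => hs n)

lemma vsr_strictMono {s : ℕ → K} (hs : IsPC v s) : StrictMono (vsr v s) := by
  apply strictMono_nat_of_lt_succ
  intro n
  have := hs n
  rw [← vsr_coe hs n, ← vsr_coe hs (n+1), WithTop.coe_lt_coe] at this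
  exact this

lemma wv_lt_delta {s : ℕ → K} {δ : WithTop ℝ} (hs : IsPC v s) (hδ : IsBreadth v s δ) (n : ℕ) :
    v (s (n + 1) - s n) < δ := by
  by_contra hcon
  push_neg at hcon
  have hb : δ < v (s (n + 2) - s (n + 1)) := lt_of_le_of_lt hcon (hs n)
  obtain ⟨m, hm1, hm2⟩ := ((hδ.2 _ hb).and (eventually_ge_atTop (n + 1))).exists
  exact absurd ((wv_strictMono hs).monotone hm2) (not_le.mpr hm1)

lemma vs_ev {s : ℕ → K} {δ : WithTop ℝ} (hδ : IsBreadth v s δ) (γ : ℝ)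
    (hγ : (γ : WithTop ℝ) < δ) : ∀ᶠ n in atTop, (γ : WithTop ℝ) < v (s (n + 1) - s n) :=
  hδ.1 _ hγ

variable (hW : ∀ a : K, 0 ≤ v a ↔ algebraMap K (AlgebraicClosure K) a ∈ W)
include hW

lemma uval_S_sub {s : ℕ → K} (n : ℕ) :
    uval v W (algebraMap K (AlgebraicClosure K) (s (n+1)) -
      algebraMap K (AlgebraicClosure K) (s n)) = v (s (n + 1) - s n) := by
  rw [← map_sub, uval_coe v W hW]

lemma dicho {s : ℕ → K} {δ : WithTop ℝ} (hs : IsPC v s) (hδ : IsBreadth v s δ)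
    (β : AlgebraicClosure K) :
    (∀ n, uval v W (algebraMap K (AlgebraicClosure K) (s n) - β) = v (s (n + 1) - s n)) ∨
    (∃ γ : ℝ, (γ : WithTop ℝ) < δ ∧ ∃ N, ∀ n ≥ N,
      uval v W (algebraMap K (AlgebraicClosure K) (s n) - β) = (γ : WithTop ℝ)) := by
  classical
  set S : ℕ → AlgebraicClosure K := fun n => algebraMap K (AlgebraicClosure K) (s n) with hS
  set a : ℕ → WithTop ℝ := fun n => uval v W (S n - β) with ha
  have hdiff : ∀ n, (S (n+1) - β) + (-(S n - β)) = S (n+1) - S n := by intro n; ring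
  have hwv : ∀ n, uval v W (S (n+1) - S n) = v (s (n+1) - s n) := fun n => by
    rw [hS]; exact uval_S_sub W hW n
  by_cases hall : ∀ n, a n < a (n + 1)
  · left
    intro n
    have hne : uval v W (S (n+1) - β) ≠ uval v W (-(S n - β)) := by
      rw [uval_neg v W hW]
      exact (hall n).ne'
    have hthis := uval_add_distinct v W hW hne
    rw [hdiff n, uval_neg v W hW, hwv n] at hthis
    exact (hthis.trans (min_eq_right (hall n).le)).symm
  · push_neg at hall
    obtain ⟨n₀, h₀⟩ := hall
    -- a (n₀+1) ≤ v (s (n₀+1) - s n₀)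
    have h1 : a (n₀ + 1) ≤ v (s (n₀ + 1) - s n₀) := by
      have hmin := uval_add_min v W hW (S (n₀+1) - β) (-(S n₀ - β))
      rw [hdiff n₀, hwv n₀, uval_neg v W hW] at hmin
      exact le_trans (le_min le_rfl h₀) hmin
    have h2 : a (n₀ + 1) < δ := lt_of_le_of_lt h1 (wv_lt_delta hs hδ n₀)
    have h3 : a (n₀ + 1) ≠ ⊤ := (lt_of_le_of_lt h1 (lt_of_le_of_ne le_top (pc_ne_top hs n₀))).ne
    obtain ⟨γ, hγ⟩ := wt_real_of_ne_top h3
    have hconst : ∀ j, a (n₀ + 1 + j) = a (n₀ + 1) := by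
      intro j
      induction j with
      | zero => rfl
      | succ j ih =>
        have hm : n₀ < n₀ + 1 + j := by omega
        have hlt : a (n₀ + 1 + j) < v (s (n₀ + 1 + j + 1) - s (n₀ + 1 + j)) := by
          rw [ih]
          exact lt_of_le_of_lt h1 (wv_strictMono hs hm)
        have hne : uval v W (S (n₀ + 1 + j + 1) - S (n₀ + 1 + j)) ≠ uval v W (S (n₀ + 1 + j) - β) := by
          rw [hwv]
          exact hlt.ne'
        have hsum : (S (n₀ + 1 + j + 1) - S (n₀ + 1 + j)) + (S (n₀ + 1 + j) - β)
            = S (n₀ + 1 + j + 1) - β := by ring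
        have := uval_add_distinct v W hW hne
        rw [hsum, hwv] at this
        have : a (n₀ + 1 + j + 1) = min (v (s (n₀ + 1 + j + 1) - s (n₀ + 1 + j))) (a (n₀ + 1 + j)) := this
        rw [min_eq_right hlt.le] at this
        rw [show n₀ + 1 + (j + 1) = n₀ + 1 + j + 1 by omega, this, ih]
    right
    refine ⟨γ, by rw [← hγ]; exact h2, n₀ + 1, fun n hn => ?_⟩
    have han : a n = a (n₀ + 1) := by
      have h := hconst (n - (n₀ + 1))
      rwa [show n₀ + 1 + (n - (n₀ + 1)) = n by omega] at h
    exact han.trans hγ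

end Seq

section Pair
variable {v : AddValuation K (WithTop ℝ)} (W : ValuationSubring (AlgebraicClosure K))
variable (hW : ∀ a : K, 0 ≤ v a ↔ algebraMap K (AlgebraicClosure K) a ∈ W)
include hW

lemma no_mixed {p q : ℕ → K} {δ : WithTop ℝ} (hp : IsPC v p) (hδp : IsBreadth v p δ)
    (Hpq : ∀ γ : ℝ, (γ : WithTop ℝ) < δ → ∀ᶠ n in atTop, (γ : WithTop ℝ) < v (p n - q n))
    (β : AlgebraicClosure K)
    (hlim : ∀ n, uval v W (algebraMap K (AlgebraicClosure K) (p n) - β) = v (p (n + 1) - p n))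
    {γ : ℝ} {N : ℕ} (hγ : (γ : WithTop ℝ) < δ)
    (hconst : ∀ n ≥ N, uval v W (algebraMap K (AlgebraicClosure K) (q n) - β) = (γ : WithTop ℝ)) :
    False := by
  obtain ⟨n, hn1, hn2, hn3⟩ :=
    ((Hpq γ hγ).and ((vs_ev hδp γ hγ).and (eventually_ge_atTop N))).exists
  set P := algebraMap K (AlgebraicClosure K) (p n)
  set Q := algebraMap K (AlgebraicClosure K) (q n)
  have hQS : Q - β = (Q - P) + (P - β) := by ring
  have h1 : uval v W (Q - P) = v (p n - q n) := by
    rw [← map_sub, uval_coe v W hW, v.map_sub_swap]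
  have hmin := uval_add_min v W hW (Q - P) (P - β)
  rw [← hQS, hconst n hn3, h1, hlim n] at hmin
  exact absurd hmin (not_le.mpr (lt_min hn1 hn2))

lemma root_pair {s t : ℕ → K} {δ : WithTop ℝ} (hs : IsPC v s) (ht : IsPC v t)
    (hδs : IsBreadth v s δ) (hδt : IsBreadth v t δ)
    (H : ∀ γ : ℝ, (γ : WithTop ℝ) < δ → ∀ᶠ n in atTop, (γ : WithTop ℝ) < v (s n - t n))
    (β : AlgebraicClosure K) :
    ((∀ n, uval v W (algebraMap K (AlgebraicClosure K) (s n) - β) = v (s (n + 1) - s n)) ∧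
     (∀ n, uval v W (algebraMap K (AlgebraicClosure K) (t n) - β) = v (t (n + 1) - t n))) ∨
    (∃ γ : ℝ, (γ : WithTop ℝ) < δ ∧ ∃ N, ∀ n ≥ N,
      uval v W (algebraMap K (AlgebraicClosure K) (s n) - β) = (γ : WithTop ℝ) ∧
      uval v W (algebraMap K (AlgebraicClosure K) (t n) - β) = (γ : WithTop ℝ)) := by
  have H' : ∀ γ : ℝ, (γ : WithTop ℝ) < δ → ∀ᶠ n in atTop, (γ : WithTop ℝ) < v (t n - s n) :=
    fun γ hγ => (H γ hγ).mono (fun n h => by rwa [v.map_sub_swap] at h)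
  rcases dicho W hW hs hδs β with hsl | ⟨γ₁, hγ₁, N₁, hc₁⟩
  · rcases dicho W hW ht hδt β with htl | ⟨γ₂, hγ₂, N₂, hc₂⟩
    · exact Or.inl ⟨hsl, htl⟩
    · exact absurd (no_mixed W hW hs hδs H β hsl hγ₂ hc₂) not_false
  · rcases dicho W hW ht hδt β with htl | ⟨γ₂, hγ₂, N₂, hc₂⟩
    · exact absurd (no_mixed W hW ht hδt H' β htl hγ₁ hc₁) not_false
    · -- both constant: γ₁ = γ₂
      have hγmax : ((max γ₁ γ₂ : ℝ) : WithTop ℝ) < δ := by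
        rcases max_cases γ₁ γ₂ with ⟨hm, _⟩ | ⟨hm, _⟩ <;> rw [hm]
        · exact hγ₁
        · exact hγ₂
      obtain ⟨n, hn1, hn2, hn3⟩ :=
        ((H _ hγmax).and ((eventually_ge_atTop N₁).and (eventually_ge_atTop N₂))).exists
      have heq : γ₁ = γ₂ := by
        set S := algebraMap K (AlgebraicClosure K) (s n)
        set T := algebraMap K (AlgebraicClosure K) (t n)
        have hTS : T - β = (T - S) + (S - β) := by ring
        have h1 : uval v W (T - S) = v (s n - t n) := by
          rw [← map_sub, uval_coe v W hW, v.map_sub_swap]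
        have hgt : (γ₁ : WithTop ℝ) < v (s n - t n) :=
          lt_of_le_of_lt (by exact_mod_cast le_max_left γ₁ γ₂) hn1
        have hne : uval v W (T - S) ≠ uval v W (S - β) := by
          rw [h1, hc₁ n hn2]
          exact hgt.ne'
        have hd := uval_add_distinct v W hW hne
        rw [← hTS, hc₂ n hn3, h1, hc₁ n hn2, min_eq_right hgt.le] at hd
        exact (WithTop.coe_eq_coe.mp hd).symm
      refine Or.inr ⟨γ₁, hγ₁, max N₁ N₂, fun n hn => ⟨hc₁ n (le_of_max_le_left hn), ?_⟩⟩
      rw [heq]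
      exact hc₂ n (le_of_max_le_right hn)

lemma sum_pair {s t : ℕ → K} {δ : WithTop ℝ} (hs : IsPC v s) (ht : IsPC v t)
    (hδs : IsBreadth v s δ) (hδt : IsBreadth v t δ)
    (H : ∀ γ : ℝ, (γ : WithTop ℝ) < δ → ∀ᶠ n in atTop, (γ : WithTop ℝ) < v (s n - t n))
    (M : Multiset (AlgebraicClosure K)) :
    ∃ (c : ℝ) (k : ℕ) (N : ℕ), ∀ n ≥ N,
      ((M.map (fun β => uval v W (algebraMap K (AlgebraicClosure K) (s n) - β))).sum
        = ((c + k * vsr v s n : ℝ) : WithTop ℝ)) ∧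
      ((M.map (fun β => uval v W (algebraMap K (AlgebraicClosure K) (t n) - β))).sum
        = ((c + k * vsr v t n : ℝ) : WithTop ℝ)) := by
  induction M using Multiset.induction_on with
  | empty =>
    refine ⟨0, 0, 0, fun n _ => ?_⟩
    simp
  | cons β M ih =>
    obtain ⟨c, k, N, hM⟩ := ih
    rcases root_pair W hW hs ht hδs hδt H β with ⟨hS, hT⟩ | ⟨γ, hγ, N', hc⟩
    · refine ⟨c, k + 1, N, fun n hn => ?_⟩
      rw [Multiset.map_cons, Multiset.sum_cons, Multiset.map_cons, Multiset.sum_cons,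
        (hM n hn).1, (hM n hn).2, hS n, hT n, ← vsr_coe hs n, ← vsr_coe ht n,
        ← WithTop.coe_add, ← WithTop.coe_add]
      constructor <;> · rw [WithTop.coe_eq_coe]; push_cast; ring
    · refine ⟨c + γ, k, max N N', fun n hn => ?_⟩
      rw [Multiset.map_cons, Multiset.sum_cons, Multiset.map_cons, Multiset.sum_cons,
        (hM n (le_of_max_le_left hn)).1, (hM n (le_of_max_le_left hn)).2,
        (hc n (le_of_max_le_right hn)).1, (hc n (le_of_max_le_right hn)).2,
        ← WithTop.coe_add, ← WithTop.coe_add]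
      constructor <;> · rw [WithTop.coe_eq_coe]; push_cast; ring

lemma poly_pair {s t : ℕ → K} {δ : WithTop ℝ} (hs : IsPC v s) (ht : IsPC v t)
    (hδs : IsBreadth v s δ) (hδt : IsBreadth v t δ)
    (H : ∀ γ : ℝ, (γ : WithTop ℝ) < δ → ∀ᶠ n in atTop, (γ : WithTop ℝ) < v (s n - t n))
    (f : Polynomial K) (hf : f ≠ 0) :
    ∃ (c : ℝ) (k : ℕ) (N : ℕ), ∀ n ≥ N,
      v (f.eval (s n)) = ((c + k * vsr v s n : ℝ) : WithTop ℝ) ∧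
      v (f.eval (t n)) = ((c + k * vsr v t n : ℝ) : WithTop ℝ) := by
  classical
  set L := AlgebraicClosure K
  set fL := f.map (algebraMap K L) with hfLdef
  have hfL : fL ≠ 0 := Polynomial.map_ne_zero hf
  have hsplit := (IsAlgClosed.splits fL).eq_prod_roots
  have heval : ∀ x : L, fL.eval x
      = fL.leadingCoeff * ((fL.roots.map (fun β => x - β)).prod) := by
    intro x
    conv_lhs => rw [hsplit]
    rw [Polynomial.eval_mul, Polynomial.eval_C, Polynomial.eval_multiset_prod,
      Multiset.map_map,
      show (Polynomial.eval x ∘ fun a => Polynomial.X - Polynomial.C a) = (fun β => x - β)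
        from funext fun β => by simp]
  have hlc : fL.leadingCoeff = algebraMap K L f.leadingCoeff :=
    Polynomial.leadingCoeff_map (algebraMap K L)
  have hlcne : f.leadingCoeff ≠ 0 := Polynomial.leadingCoeff_ne_zero.mpr hf
  obtain ⟨rlc, hrlc⟩ := v_real v hlcne
  obtain ⟨c, k, N, hM⟩ := sum_pair W hW hs ht hδs hδt H fL.roots
  refine ⟨rlc + c, k, N, fun n hn => ?_⟩
  have key : ∀ x : K, (∀ w : ℝ, ((fL.roots.map (fun β => uval v W (algebraMap K L x - β))).sum
      = ((w : ℝ) : WithTop ℝ)) →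
      v (f.eval x) = ((rlc + w : ℝ) : WithTop ℝ)) := by
    intro x w hsum
    have h1 : algebraMap K L (f.eval x) = fL.eval (algebraMap K L x) := by
      rw [hfLdef, Polynomial.eval_map, Polynomial.eval₂_at_apply]
    have h2 : v (f.eval x) = uval v W (fL.eval (algebraMap K L x)) := by
      rw [← h1, uval_coe v W hW]
    rw [h2, heval, uval_mul v W hW, uval_prod v W hW, Multiset.map_map]
    rw [hlc, uval_coe v W hW, hrlc]
    have : (Multiset.map ((fun β => uval v W (algebraMap K L x - β))) fL.roots).sum
        = ((w : ℝ) : WithTop ℝ) := hsum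
    rw [show (Multiset.map (uval v W ∘ fun β => algebraMap K L x - β) fL.roots).sum
        = (Multiset.map ((fun β => uval v W (algebraMap K L x - β))) fL.roots).sum from rfl,
      this, ← WithTop.coe_add]
  constructor
  · rw [key (s n) (c + k * vsr v s n) (hM n hn).1, ← add_assoc]
  · rw [key (t n) (c + k * vsr v t n) (hM n hn).2, ← add_assoc]

end Pair

section Rat
variable {v : AddValuation K (WithTop ℝ)} (W : ValuationSubring (AlgebraicClosure K))
variable (hW : ∀ a : K, 0 ≤ v a ↔ algebraMap K (AlgebraicClosure K) a ∈ W)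
include hW

lemma rat_pair {s t : ℕ → K} {δ : WithTop ℝ} (hs : IsPC v s) (ht : IsPC v t)
    (hδs : IsBreadth v s δ) (hδt : IsBreadth v t δ)
    (H : ∀ γ : ℝ, (γ : WithTop ℝ) < δ → ∀ᶠ n in atTop, (γ : WithTop ℝ) < v (s n - t n))
    (φ : RatFunc K) (hφ : φ ≠ 0) :
    ∃ (A kz : ℝ) (N : ℕ), ∀ n ≥ N,
      v (RatFunc.eval (RingHom.id K) (s n) φ) = ((A + kz * vsr v s n : ℝ) : WithTop ℝ) ∧
      v (RatFunc.eval (RingHom.id K) (t n) φ) = ((A + kz * vsr v t n : ℝ) : WithTop ℝ) := by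
  obtain ⟨c₁, k₁, N₁, h₁⟩ := poly_pair W hW hs ht hδs hδt H φ.num (RatFunc.num_ne_zero hφ)
  obtain ⟨c₂, k₂, N₂, h₂⟩ := poly_pair W hW hs ht hδs hδt H φ.denom (RatFunc.denom_ne_zero φ)
  refine ⟨c₁ - c₂, (k₁ : ℝ) - k₂, max N₁ N₂, fun n hn => ?_⟩
  have heval : ∀ x : K, RatFunc.eval (RingHom.id K) x φ = (φ.num.eval x) / (φ.denom.eval x) := by
    intro x
    rfl
  constructor
  · rw [heval, v.map_div, (h₁ n (le_of_max_le_left hn)).1, (h₂ n (le_of_max_le_right hn)).1]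
    have : ((c₁ + k₁ * vsr v s n : ℝ) : WithTop ℝ) - ((c₂ + k₂ * vsr v s n : ℝ) : WithTop ℝ)
        = (((c₁ + k₁ * vsr v s n) - (c₂ + k₂ * vsr v s n) : ℝ) : WithTop ℝ) := rfl
    rw [this, WithTop.coe_eq_coe]
    ring
  · rw [heval, v.map_div, (h₁ n (le_of_max_le_left hn)).2, (h₂ n (le_of_max_le_right hn)).2]
    have : ((c₁ + k₁ * vsr v t n : ℝ) : WithTop ℝ) - ((c₂ + k₂ * vsr v t n : ℝ) : WithTop ℝ)
        = (((c₁ + k₁ * vsr v t n) - (c₂ + k₂ * vsr v t n) : ℝ) : WithTop ℝ) := rfl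
    rw [this, WithTop.coe_eq_coe]
    ring

end Rat

lemma crit_iff {δ : WithTop ℝ} (x : ℕ → ℝ)
    (hlt : ∀ n, (x n : WithTop ℝ) < δ)
    (hev : ∀ γ : ℝ, (γ : WithTop ℝ) < δ → ∀ᶠ n in atTop, γ < x n)
    (A k : ℝ) :
    (∀ᶠ n in atTop, 0 ≤ A + k * x n) ↔
      ((k = 0 ∧ 0 ≤ A) ∨ (0 < k ∧ ((-A / k : ℝ) : WithTop ℝ) < δ) ∨
        (k < 0 ∧ δ ≤ ((A / -k : ℝ) : WithTop ℝ))) := by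
  rcases lt_trichotomy k 0 with hk | hk | hk
  · constructor
    · intro h
      refine Or.inr (Or.inr ⟨hk, ?_⟩)
      by_contra hC
      push_neg at hC
      obtain ⟨n, hn1, hn2⟩ := ((hev _ hC).and h).exists
      have hkpos : (0 : ℝ) < -k := by linarith
      have : A < x n * -k := (div_lt_iff₀ hkpos).mp hn1
      linarith
    · rintro (⟨h0, _⟩ | ⟨h0, _⟩ | ⟨_, hle⟩)
      · exact absurd h0 hk.ne
      · exact absurd h0 (not_lt.mpr hk.le)
      · refine Filter.Eventually.of_forall (fun n => ?_)
        have h1 : ((x n : ℝ) : WithTop ℝ) < ((A / -k : ℝ) : WithTop ℝ) := lt_of_lt_of_le (hlt n) hle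
        have h2 : x n < A / -k := WithTop.coe_lt_coe.mp h1
        have hkpos : (0 : ℝ) < -k := by linarith
        have : x n * -k < A := (lt_div_iff₀ hkpos).mp h2
        linarith
  · subst hk
    have hconst : (∀ᶠ n in atTop, 0 ≤ A + 0 * x n) ↔ 0 ≤ A := by
      simp only [zero_mul, add_zero]
      exact ⟨fun h => h.exists.choose_spec,
        fun h => Filter.Eventually.of_forall (fun _ => h)⟩
    rw [hconst]
    constructor
    · intro h; exact Or.inl ⟨rfl, h⟩
    · rintro (⟨_, h⟩ | ⟨h0, _⟩ | ⟨h0, _⟩)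
      · exact h
      · exact absurd h0 (lt_irrefl 0)
      · exact absurd h0 (lt_irrefl 0)
  · constructor
    · intro h
      obtain ⟨n, hn⟩ := h.exists
      refine Or.inr (Or.inl ⟨hk, ?_⟩)
      have : -A / k ≤ x n := (div_le_iff₀ hk).mpr (by linarith)
      exact lt_of_le_of_lt (WithTop.coe_le_coe.mpr this) (hlt n)
    · rintro (⟨h0, _⟩ | ⟨_, hlt'⟩ | ⟨h0, _⟩)
      · exact absurd h0 hk.ne'
      · refine (hev _ hlt').mono (fun n hn => ?_)
        have : -A < x n * k := (div_lt_iff₀ hk).mp hn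
        linarith
      · exact absurd h0 (not_lt.mpr hk.le)

section VE
variable {v : AddValuation K (WithTop ℝ)}

lemma veset_eq {s t : ℕ → K} {δ : WithTop ℝ} (hs : IsPC v s) (ht : IsPC v t)
    (hδs : IsBreadth v s δ) (hδt : IsBreadth v t δ)
    (H : ∀ γ : ℝ, (γ : WithTop ℝ) < δ → ∀ᶠ n in atTop, (γ : WithTop ℝ) < v (s n - t n)) :
    VESet v s = VESet v t := by
  obtain ⟨W, hW⟩ := exists_good_W v
  ext φ
  simp only [VESet, Set.mem_setOf_eq]
  by_cases hφ : φ = 0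
  · subst hφ
    simp [RatFunc.eval_zero, v.map_zero]
  obtain ⟨A, kz, N, hAk⟩ := rat_pair W hW hs ht hδs hδt H φ hφ
  have hcoe : ∀ (r : ℝ), ((0 : WithTop ℝ) ≤ ((r : ℝ) : WithTop ℝ)) ↔ 0 ≤ r := by
    intro r
    exact_mod_cast Iff.rfl
  have hsx : ∀ n, ((vsr v s n : ℝ) : WithTop ℝ) < δ := fun n => by
    rw [vsr_coe hs n]; exact wv_lt_delta hs hδs n
  have htx : ∀ n, ((vsr v t n : ℝ) : WithTop ℝ) < δ := fun n => by
    rw [vsr_coe ht n]; exact wv_lt_delta ht hδt n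
  have hsev : ∀ γ : ℝ, (γ : WithTop ℝ) < δ → ∀ᶠ n in atTop, γ < vsr v s n := fun γ hγ =>
    (vs_ev hδs γ hγ).mono (fun n h => by
      rw [← vsr_coe hs n] at h; exact_mod_cast h)
  have htev : ∀ γ : ℝ, (γ : WithTop ℝ) < δ → ∀ᶠ n in atTop, γ < vsr v t n := fun γ hγ =>
    (vs_ev hδt γ hγ).mono (fun n h => by
      rw [← vsr_coe ht n] at h; exact_mod_cast h)
  have hls : (∀ᶠ n in atTop, 0 ≤ v (RatFunc.eval (RingHom.id K) (s n) φ))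
      ↔ (∀ᶠ n in atTop, 0 ≤ A + kz * vsr v s n) := by
    constructor
    · intro h
      filter_upwards [h, eventually_ge_atTop N] with n h1 h2
      rw [(hAk n h2).1] at h1
      exact (hcoe _).mp h1
    · intro h
      filter_upwards [h, eventually_ge_atTop N] with n h1 h2
      rw [(hAk n h2).1]
      exact (hcoe _).mpr h1
  have hlt' : (∀ᶠ n in atTop, 0 ≤ v (RatFunc.eval (RingHom.id K) (t n) φ))
      ↔ (∀ᶠ n in atTop, 0 ≤ A + kz * vsr v t n) := by
    constructor
    · intro h
      filter_upwards [h, eventually_ge_atTop N] with n h1 h2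
      rw [(hAk n h2).2] at h1
      exact (hcoe _).mp h1
    · intro h
      filter_upwards [h, eventually_ge_atTop N] with n h1 h2
      rw [(hAk n h2).2]
      exact (hcoe _).mpr h1
  rw [hls, hlt', crit_iff (vsr v s) hsx hsev A kz, crit_iff (vsr v t) htx htev A kz]

end VE


lemma expNeg_top : expNeg (⊤ : WithTop ℝ) = 0 := rfl
lemma expNeg_coe (r : ℝ) : expNeg (r : WithTop ℝ) = Real.exp (-r) := rfl

lemma expNeg_nonneg (δ : WithTop ℝ) : 0 ≤ expNeg δ := by
  induction δ using WithTop.recTopCoe with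
  | top => rw [expNeg_top]
  | coe r => rw [expNeg_coe]; exact (Real.exp_pos _).le

lemma expNeg_lt_of_lt {γ : ℝ} {δ : WithTop ℝ} (h : (γ : WithTop ℝ) < δ) :
    expNeg δ < Real.exp (-γ) := by
  induction δ using WithTop.recTopCoe with
  | top => rw [expNeg_top]; exact Real.exp_pos _
  | coe d =>
    rw [expNeg_coe]
    have : γ < d := WithTop.coe_lt_coe.mp h
    exact Real.exp_lt_exp.mpr (by linarith)

lemma lt_of_expNeg_lt {γ : ℝ} {a : WithTop ℝ} (h : expNeg a < Real.exp (-γ)) :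
    (γ : WithTop ℝ) < a := by
  induction a using WithTop.recTopCoe with
  | top => exact WithTop.coe_lt_top γ
  | coe r =>
    rw [expNeg_coe] at h
    have : -r < -γ := Real.exp_lt_exp.mp h
    exact WithTop.coe_lt_coe.mpr (by linarith)

lemma expNeg_antitone {a b : WithTop ℝ} (h : a ≤ b) : expNeg b ≤ expNeg a := by
  induction a using WithTop.recTopCoe with
  | top =>
    have : b = ⊤ := top_le_iff.mp h
    rw [this]
  | coe r =>
    induction b using WithTop.recTopCoe with
    | top => rw [expNeg_top, expNeg_coe]; exact (Real.exp_pos _).le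
    | coe r' =>
      rw [expNeg_coe, expNeg_coe]
      have : r ≤ r' := WithTop.coe_le_coe.mp h
      exact Real.exp_le_exp.mpr (by linarith)

section DKfacts
variable (v : AddValuation K (WithTop ℝ))

lemma dK_self (x : K) : dK v x x = 0 := by
  rw [dK, sub_self, v.map_zero, expNeg_top]

lemma dK_comm (x y : K) : dK v x y = dK v y x := by
  rw [dK, dK, v.map_sub_swap]

lemma dK_ultra (x y z : K) : dK v x z ≤ max (dK v x y) (dK v y z) := by
  have h1 : min (v (x - y)) (v (y - z)) ≤ v (x - z) := by
    have := v.map_add (x - y) (y - z)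
    rwa [show (x - y) + (y - z) = x - z by ring] at this
  have h2 : expNeg (v (x - z)) ≤ expNeg (min (v (x - y)) (v (y - z))) := expNeg_antitone h1
  rcases min_cases (v (x - y)) (v (y - z)) with ⟨hm, _⟩ | ⟨hm, _⟩ <;> rw [hm] at h2
  · exact le_trans h2 (le_max_left _ _)
  · exact le_trans h2 (le_max_right _ _)

end DKfacts

lemma max_sub_le {a b c e : ℝ} (h : a ≤ max b c) :
    max (a - e) 0 ≤ max (max (b - e) 0) (max (c - e) 0) := by
  rcases le_max_iff.mp h with hb | hb
  · exact le_trans (max_le_max (sub_le_sub_right hb e) le_rfl) (le_max_left _ _)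
  · exact le_trans (max_le_max (sub_le_sub_right hb e) le_rfl) (le_max_right _ _)


/-- `d_δ` is an ultrametric distance on `𝒱(•,δ)`: it is symmetric,
vanishes exactly on the diagonal, and satisfies the strong triangle inequality. -/
theorem statement1 (v : AddValuation K (WithTop ℝ)) (hv : IsRankOne v)
    (δ : WithTop ℝ)
    (dd : ValuationSubring (RatFunc K) → ValuationSubring (RatFunc K) → ℝ)
    (hdd : IsDistδ v δ dd) :
    (∀ W ∈ VVδ v δ, ∀ W' ∈ VVδ v δ, dd W W' = dd W' W) ∧
    (∀ W ∈ VVδ v δ, ∀ W' ∈ VVδ v δ, (dd W W' = 0 ↔ W = W')) ∧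
    (∀ W ∈ VVδ v δ, ∀ W' ∈ VVδ v δ, ∀ W'' ∈ VVδ v δ,
      dd W W' ≤ max (dd W W'') (dd W'' W')) := by
  classical
  refine ⟨?_, ?_, ?_⟩
  · rintro W ⟨s, hs, hδs, hset⟩ W' ⟨t, ht, hδt, htset⟩
    have h1 := hdd W W' s t hs hδs hset ht hδt htset
    have h2 := hdd W' W t s ht hδt htset hs hδs hset
    have he : (fun n => max (dK v (t n) (s n) - expNeg δ) 0)
        = (fun n => max (dK v (s n) (t n) - expNeg δ) 0) :=
      funext fun n => by rw [dK_comm]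
    rw [he] at h2
    exact tendsto_nhds_unique h1 h2
  · rintro W ⟨s, hs, hδs, hset⟩ W' ⟨t, ht, hδt, htset⟩
    constructor
    · intro h0
      have h1 := hdd W W' s t hs hδs hset ht hδt htset
      rw [h0] at h1
      have H : ∀ γ : ℝ, (γ : WithTop ℝ) < δ →
          ∀ᶠ n in atTop, (γ : WithTop ℝ) < v (s n - t n) := by
        intro γ hγ
        have hε : (0 : ℝ) < Real.exp (-γ) - expNeg δ := sub_pos.mpr (expNeg_lt_of_lt hγ)
        have hev := h1.eventually_lt_const hε
        refine hev.mono (fun n hn => ?_)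
        have h2 : dK v (s n) (t n) - expNeg δ < Real.exp (-γ) - expNeg δ :=
          lt_of_le_of_lt (le_max_left _ _) hn
        have h3 : dK v (s n) (t n) < Real.exp (-γ) := by linarith
        exact lt_of_expNeg_lt h3
      have hVE := veset_eq hs ht hδs hδt H
      exact SetLike.coe_injective (by rw [hset, hVE, ← htset])
    · intro h
      rw [← h]
      have h1 := hdd W W s s hs hδs hset hs hδs hset
      have he : (fun n => max (dK v (s n) (s n) - expNeg δ) 0) = (fun _ => (0 : ℝ)) :=
        funext fun n => by
          rw [dK_self]
          exact max_eq_right (by linarith [expNeg_nonneg δ])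
      rw [he] at h1
      exact tendsto_nhds_unique h1 tendsto_const_nhds
  · rintro W ⟨s, hs, hδs, hset⟩ W' ⟨t, ht, hδt, htset⟩ W'' ⟨r, hr, hδr, hrset⟩
    have h1 := hdd W W' s t hs hδs hset ht hδt htset
    have h2 := hdd W W'' s r hs hδs hset hr hδr hrset
    have h3 := hdd W'' W' r t hr hδr hrset ht hδt htset
    refine le_of_tendsto_of_tendsto' h1 (h2.max h3) (fun n => ?_)
    exact max_sub_le (dK_ultra v (s n) (r n) (t n))



end PaperPCZar
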